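/- For a monotone non-decreasing submodular set function f with f(∅) = 0 on a finite ground set, the greedy algorithm that iteratively adds the element of maximum marginal gain produces, after k steps, a set G with f(G) ≥ (1 − (1 − 1/k)^k) · max_{|S| ≤ k} f(S) ≥ (1 − 1/e) · max_{|S| ≤ k} f(S). -/

import Mathlib

open Finset

/-- Nemhauser–Wolsey–Fisher guarantee: for a monotone, submodular, normalized
set function `f` on a finite ground set, the greedy algorithm (with picks
`g i` and iterates `G 0 = ∅`, `G (i+1) = insert (g i) (G i)`, each pick
maximizing the marginal gain) satisfies, after `k` steps,
`f (G k) ≥ (1 - (1 - 1/k)^k) · max_{|S| ≤ k} f S ≥ (1 - 1/e) · max_{|S| ≤ k} f S`. -/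
theorem greedy_submodular_guarantee {ι : Type*} [Fintype ι] [DecidableEq ι]
    (f : Finset ι → ℝ)
    (hmono : ∀ S T : Finset ι, S ⊆ T → f S ≤ f T)
    (hsub : ∀ S T : Finset ι, S ⊆ T → ∀ j ∉ T,
      f (insert j T) - f T ≤ f (insert j S) - f S)
    (hempty : f ∅ = 0)
    (k : ℕ) (hk : 0 < k)
    (g : ℕ → ι) (G : ℕ → Finset ι)
    (hG0 : G 0 = ∅) (hGs : ∀ i, G (i + 1) = insert (g i) (G i))
    (hgreedy : ∀ i, ∀ x : ι, f (insert x (G i)) ≤ f (insert (g i) (G i))) :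
    ∀ S : Finset ι, S.card ≤ k →
      (1 - (1 - 1 / (k : ℝ)) ^ k) * f S ≤ f (G k) ∧
      (1 - 1 / Real.exp 1) * f S ≤ f (G k) := by
  have hkpos : (0:ℝ) < (k:ℝ) := by exact_mod_cast hk
  have hk1 : (1:ℝ) ≤ (k:ℝ) := by exact_mod_cast hk
  have hnn : (0:ℝ) ≤ 1 - 1/(k:ℝ) := by
    have : 1/(k:ℝ) ≤ 1 := by
      rw [div_le_one hkpos]; exact hk1
    linarith
  have hfnn : ∀ S : Finset ι, 0 ≤ f S := fun S => by
    have := hmono ∅ S (empty_subset S); linarith [hempty ▸ this]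
  -- key subadditivity of marginals
  have key : ∀ (T S : Finset ι),
      f (S ∪ T) - f T ≤ ∑ x ∈ S \ T, (f (insert x T) - f T) := by
    intro T S
    induction S using Finset.induction_on with
    | empty => simp
    | insert a S ha ih =>
      by_cases haT : a ∈ T
      · have h1 : insert a S ∪ T = S ∪ T := by
          rw [insert_union, insert_eq_self.mpr (mem_union_right _ haT)]
        have h2 : insert a S \ T = S \ T := by
          ext x
          simp only [mem_sdiff, mem_insert]
          constructor
          · rintro ⟨hx | hx, hxT⟩
            · exact absurd (hx ▸ haT) hxT
            · exact ⟨hx, hxT⟩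
          · exact fun ⟨hx, hxT⟩ => ⟨Or.inr hx, hxT⟩
        rw [h1, h2]; exact ih
      · have haST : a ∉ S ∪ T := by simp [ha, haT]
        have hsubm := hsub T (S ∪ T) subset_union_right a haST
        have h2 : insert a S \ T = insert a (S \ T) :=
          insert_sdiff_of_notMem _ haT
        have h3 : a ∉ S \ T := fun h => ha (mem_sdiff.mp h).1
        rw [h2, Finset.sum_insert h3, insert_union]
        linarith
  -- per-step bound
  have step : ∀ i, ∀ S : Finset ι, S.card ≤ k →
      f S - f (G i) ≤ (k:ℝ) * (f (G (i+1)) - f (G i)) := by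
    intro i S hS
    have h1 : f S ≤ f (S ∪ G i) := hmono _ _ subset_union_left
    have h2 := key (G i) S
    have gain_nn : 0 ≤ f (G (i+1)) - f (G i) := by
      rw [hGs]
      have := hmono (G i) (insert (g i) (G i)) (subset_insert _ _)
      linarith
    have h3 : ∀ x ∈ S \ G i, f (insert x (G i)) - f (G i) ≤ f (G (i+1)) - f (G i) := by
      intro x _
      rw [hGs]
      have := hgreedy i x
      linarith
    have h4 : ∑ x ∈ S \ G i, (f (insert x (G i)) - f (G i))
        ≤ ((S \ G i).card : ℝ) * (f (G (i+1)) - f (G i)) := by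
      have := Finset.sum_le_card_nsmul (S \ G i) _ _ h3
      simpa [nsmul_eq_mul] using this
    have h5 : ((S \ G i).card : ℝ) ≤ (k:ℝ) := by
      exact_mod_cast le_trans (card_le_card sdiff_subset) hS
    have h6 : ((S \ G i).card : ℝ) * (f (G (i+1)) - f (G i))
        ≤ (k:ℝ) * (f (G (i+1)) - f (G i)) :=
      mul_le_mul_of_nonneg_right h5 gain_nn
    linarith
  intro S hS
  have hd : ∀ i, f S - f (G i) ≤ (1 - 1/(k:ℝ))^i * f S := by
    intro i
    induction i with
    | zero => simp [hG0, hempty]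
    | succ i ih =>
      have hstep := step i S hS
      have hmain : f S - f (G (i+1)) ≤ (1 - 1/(k:ℝ)) * (f S - f (G i)) := by
        rw [show (1 - 1/(k:ℝ)) * (f S - f (G i)) = ((k:ℝ) * (f S - f (G (i+1))) +
          ((k - 1) * (f S - f (G i)) - (k:ℝ) * (f S - f (G (i+1))))) / k from by
            field_simp; ring]
        rw [le_div_iff₀ hkpos]
        nlinarith [hstep]
      calc f S - f (G (i+1)) ≤ (1 - 1/(k:ℝ)) * (f S - f (G i)) := hmain
        _ ≤ (1 - 1/(k:ℝ)) * ((1 - 1/(k:ℝ))^i * f S) :=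
            mul_le_mul_of_nonneg_left ih hnn
        _ = (1 - 1/(k:ℝ))^(i+1) * f S := by ring
  have first : (1 - (1 - 1 / (k : ℝ)) ^ k) * f S ≤ f (G k) := by
    have := hd k
    nlinarith [this]
  refine ⟨first, ?_⟩
  have hpow : (1 - 1/(k:ℝ))^k ≤ 1 / Real.exp 1 := by
    have h1 : (1:ℝ) - 1/(k:ℝ) ≤ Real.exp (-(1/(k:ℝ))) := by
      have := Real.add_one_le_exp (-(1/(k:ℝ)))
      linarith
    calc (1 - 1/(k:ℝ))^k ≤ (Real.exp (-(1/(k:ℝ))))^k := pow_le_pow_left₀ hnn h1 k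
      _ = Real.exp ((k:ℝ) * (-(1/(k:ℝ)))) := (Real.exp_nat_mul _ k).symm
      _ = 1 / Real.exp 1 := by
          rw [show (k:ℝ) * (-(1/(k:ℝ))) = -1 from by field_simp, Real.exp_neg, one_div]
  have hfS := hfnn S
  calc (1 - 1 / Real.exp 1) * f S ≤ (1 - (1 - 1/(k:ℝ))^k) * f S :=
        mul_le_mul_of_nonneg_right (by linarith) hfS
    _ ≤ f (G k) := first
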